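/- Let H_S be a Hilbert space, V_S an isometry on H_S with V_S^{*n} → 0 strongly, and φ_p : H_S → V quadratic forms (into a normed space V) satisfying the shift invariance φ_p(V_S h) = φ_p(h) and such that the sesquilinear cross terms satisfy: for fixed h, h̃, the cross term of φ_p evaluated at h and V_S^n h̃ tends to 0 as n → ∞. Then for unit vectors h, h̃ and 0 < α < 1, setting h_n = √α h + √(1−α) V_S^n h̃, one has ‖h_n‖ → 1 and φ_p(h_n/‖h_n‖) → α φ_p(h) + (1−α) φ_p(h̃); hence the closure of {(φ_p(h))_p : ‖h‖ = 1} is convex. -/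

import Mathlib

open Filter Topology

/-- **Convexity of the closure of `∇` via the shift trick** (Megretski–Treil).
Let `V_S` be an isometry on a Hilbert space `H_S` with `V_S*ⁿ → 0` strongly, and
let `φ_p(h) = B_p(h,h)` for sesquilinear forms `B_p` (valued in a
finite-dimensional normed space) which are shift invariant and whose cross
terms vanish asymptotically along the shift.  Then for unit vectors `h, h̃` and
`0 < α < 1`, with `h_n = √α h + √(1−α) V_Sⁿ h̃`, one has `‖h_n‖ → 1` and
`φ_p(h_n/‖h_n‖) → α φ_p(h) + (1−α) φ_p(h̃)`; hence the closure of
`{(φ_p(h))_p : ‖h‖ = 1}` is convex. -/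
theorem closure_nabla_convex
    {H : Type*} [NormedAddCommGroup H] [InnerProductSpace ℂ H] [CompleteSpace H]
    {P : Type*} [Fintype P]
    {F : Type*} [NormedAddCommGroup F] [NormedSpace ℂ F] [NormedSpace ℝ F]
    [IsScalarTower ℝ ℂ F] [FiniteDimensional ℂ F]
    (V : H →L[ℂ] H) (hiso : ∀ x, ‖V x‖ = ‖x‖)
    (hadj : ∀ x : H, Tendsto (fun n => ContinuousLinearMap.adjoint (V ^ n) x) atTop (𝓝 0))
    (B : P → (H →ₗ⋆[ℂ] (H →ₗ[ℂ] F)))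
    (hshift : ∀ p (x y : H), B p (V x) (V y) = B p x y)
    (hcross : ∀ p (x y : H),
      Tendsto (fun n => B p x ((V ^ n) y) + B p ((V ^ n) y) x) atTop (𝓝 0)) :
    (∀ (p₀ : P) (x y : H), ‖x‖ = 1 → ‖y‖ = 1 → ∀ α : ℝ, 0 < α → α < 1 →
      (Tendsto (fun n =>
          ‖(Real.sqrt α : ℂ) • x + (Real.sqrt (1 - α) : ℂ) • ((V ^ n) y)‖) atTop (𝓝 1)) ∧
      Tendsto (fun n =>
          B p₀ ((‖(Real.sqrt α : ℂ) • x + (Real.sqrt (1 - α) : ℂ) • ((V ^ n) y)‖ : ℂ)⁻¹ •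
              ((Real.sqrt α : ℂ) • x + (Real.sqrt (1 - α) : ℂ) • ((V ^ n) y)))
            ((‖(Real.sqrt α : ℂ) • x + (Real.sqrt (1 - α) : ℂ) • ((V ^ n) y)‖ : ℂ)⁻¹ •
              ((Real.sqrt α : ℂ) • x + (Real.sqrt (1 - α) : ℂ) • ((V ^ n) y))))
        atTop (𝓝 ((α : ℂ) • B p₀ x x + ((1 - α : ℝ) : ℂ) • B p₀ y y))) ∧
    Convex ℝ (closure {v : P → F | ∃ x : H, ‖x‖ = 1 ∧ ∀ p, v p = B p x x}) := by
  -- iterated isometry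
  have hVn : ∀ (n : ℕ) (z : H), ‖(V ^ n) z‖ = ‖z‖ := by
    intro n
    induction n with
    | zero => intro z; simp
    | succ n ih =>
        intro z
        rw [pow_succ, ContinuousLinearMap.mul_apply, ih (V z), hiso]
  -- iterated shift invariance
  have hBn : ∀ (p : P) (n : ℕ) (u w : H), B p ((V ^ n) u) ((V ^ n) w) = B p u w := by
    intro p n
    induction n with
    | zero => intro u w; simp
    | succ n ih =>
        intro u w
        rw [pow_succ, ContinuousLinearMap.mul_apply, ContinuousLinearMap.mul_apply,
          ih (V u) (V w), hshift]
  have main : ∀ (p₀ : P) (x y : H), ‖x‖ = 1 → ‖y‖ = 1 → ∀ α : ℝ, 0 < α → α < 1 →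
      (Tendsto (fun n =>
          ‖(Real.sqrt α : ℂ) • x + (Real.sqrt (1 - α) : ℂ) • ((V ^ n) y)‖) atTop (𝓝 1)) ∧
      Tendsto (fun n =>
          B p₀ ((‖(Real.sqrt α : ℂ) • x + (Real.sqrt (1 - α) : ℂ) • ((V ^ n) y)‖ : ℂ)⁻¹ •
              ((Real.sqrt α : ℂ) • x + (Real.sqrt (1 - α) : ℂ) • ((V ^ n) y)))
            ((‖(Real.sqrt α : ℂ) • x + (Real.sqrt (1 - α) : ℂ) • ((V ^ n) y)‖ : ℂ)⁻¹ •
              ((Real.sqrt α : ℂ) • x + (Real.sqrt (1 - α) : ℂ) • ((V ^ n) y))))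
        atTop (𝓝 ((α : ℂ) • B p₀ x x + ((1 - α : ℝ) : ℂ) • B p₀ y y)) := by
    intro p₀ x y hx hy α hα0 hα1
    have hα0' : (0:ℝ) ≤ α := le_of_lt hα0
    have hα1' : (0:ℝ) ≤ 1 - α := by linarith
    set a : ℝ := Real.sqrt α with ha_def
    set b : ℝ := Real.sqrt (1 - α) with hb_def
    have ha2 : a * a = α := Real.mul_self_sqrt hα0'
    have hb2 : b * b = 1 - α := Real.mul_self_sqrt hα1'
    have ha_nonneg : 0 ≤ a := Real.sqrt_nonneg _
    have hb_nonneg : 0 ≤ b := Real.sqrt_nonneg _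
    set h : ℕ → H := fun n => (a : ℂ) • x + (b : ℂ) • ((V ^ n) y) with hh_def
    -- inner product cross term tends to 0
    have hinner : Tendsto (fun n => (inner ℂ x ((V ^ n) y) : ℂ)) atTop (𝓝 0) := by
      have h1 : ∀ n, (inner ℂ x ((V ^ n) y) : ℂ) =
          inner ℂ (ContinuousLinearMap.adjoint (V ^ n) x) y := fun n =>
        (ContinuousLinearMap.adjoint_inner_left (V ^ n) y x).symm
      simp only [h1]
      have := Filter.Tendsto.inner (𝕜 := ℂ) (hadj x) (tendsto_const_nhds (x := y))
      simpa using this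
    -- norm squared
    have hnormsq : ∀ n, ‖h n‖ ^ 2 = 1 + 2 * (a * b * (inner ℂ x ((V ^ n) y) : ℂ).re) := by
      intro n
      rw [hh_def]
      rw [norm_add_sq (𝕜 := ℂ)]
      rw [inner_smul_left, inner_smul_right]
      rw [norm_smul, norm_smul]
      simp only [Complex.norm_real, Real.norm_eq_abs, abs_of_nonneg ha_nonneg,
        abs_of_nonneg hb_nonneg, hVn, hx, hy, Complex.conj_ofReal]
      have hre' : RCLike.re ((a:ℂ) * ((b:ℂ) * inner ℂ x ((V ^ n) y))) =
          a * b * (inner ℂ x ((V ^ n) y) : ℂ).re := by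
        simp only [RCLike.re_to_complex, Complex.mul_re, Complex.ofReal_re,
          Complex.ofReal_im]
        ring
      rw [hre']
      nlinarith [ha2, hb2]
    have hre : Tendsto (fun n => (inner ℂ x ((V ^ n) y) : ℂ).re) atTop (𝓝 0) :=
      (Complex.continuous_re.tendsto 0).comp hinner
    have hnsq : Tendsto (fun n => ‖h n‖ ^ 2) atTop (𝓝 1) := by
      simp only [hnormsq]
      have := ((hre.const_mul (a * b)).const_mul 2).const_add 1
      simpa using this
    have hnorm : Tendsto (fun n => ‖h n‖) atTop (𝓝 1) := by
      have : Tendsto (fun n => Real.sqrt (‖h n‖ ^ 2)) atTop (𝓝 (Real.sqrt 1)) :=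
        (Real.continuous_sqrt.tendsto 1).comp hnsq
      simpa [Real.sqrt_sq (norm_nonneg _), Real.sqrt_one] using this
    refine ⟨hnorm, ?_⟩
    -- expansion of B on h n
    set L : F := (α : ℂ) • B p₀ x x + ((1 - α : ℝ) : ℂ) • B p₀ y y with hL_def
    have hexp : ∀ n, B p₀ (h n) (h n) =
        L + ((a * b : ℝ) : ℂ) • (B p₀ x ((V ^ n) y) + B p₀ ((V ^ n) y) x) := by
      intro n
      rw [hh_def, hL_def]
      simp only [map_add, map_smulₛₗ, LinearMap.add_apply, LinearMap.smul_apply,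
        map_smul, Complex.conj_ofReal, hBn, smul_smul, smul_add, RingHom.id_apply]
      rw [← Complex.ofReal_mul a a, ha2, ← Complex.ofReal_mul b b, hb2,
        ← Complex.ofReal_mul a b, ← Complex.ofReal_mul b a, mul_comm b a]
      abel
    have hBlim : Tendsto (fun n => B p₀ (h n) (h n)) atTop (𝓝 L) := by
      simp only [hexp]
      have : Tendsto (fun n => L + ((a * b : ℝ) : ℂ) •
          (B p₀ x ((V ^ n) y) + B p₀ ((V ^ n) y) x)) atTop
          (𝓝 (L + ((a * b : ℝ) : ℂ) • (0 : F))) :=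
        tendsto_const_nhds.add (tendsto_const_nhds.smul (hcross p₀ x y))
      simpa using this
    -- scaled version
    have hscaled : ∀ n,
        B p₀ ((‖h n‖ : ℂ)⁻¹ • h n) ((‖h n‖ : ℂ)⁻¹ • h n) =
        ((‖h n‖ : ℂ)⁻¹ * (‖h n‖ : ℂ)⁻¹) • B p₀ (h n) (h n) := by
      intro n
      have e1 : B p₀ ((‖h n‖ : ℂ)⁻¹ • h n) =
          (starRingEnd ℂ) ((‖h n‖ : ℂ)⁻¹) • B p₀ (h n) := map_smulₛₗ (B p₀) _ _
      rw [e1, LinearMap.smul_apply, map_smul, smul_smul, map_inv₀, Complex.conj_ofReal]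
    have htinv : Tendsto (fun n => ((‖h n‖ : ℂ)⁻¹ * (‖h n‖ : ℂ)⁻¹)) atTop (𝓝 1) := by
      have h1 : Tendsto (fun n => ((‖h n‖ : ℝ) : ℂ)) atTop (𝓝 1) := by
        have := (Complex.continuous_ofReal.tendsto 1).comp hnorm
        rw [Complex.ofReal_one] at this
        exact this
      have h2 : Tendsto (fun n => ((‖h n‖ : ℝ) : ℂ)⁻¹) atTop (𝓝 1) := by
        have := h1.inv₀ (by norm_num)
        simpa using this
      have := h2.mul h2
      simpa using this
    have hfin := htinv.smul hBlim
    simp only [one_smul] at hfin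
    refine Tendsto.congr (fun n => ?_) hfin
    exact (hscaled n).symm
  refine ⟨main, ?_⟩
  set S : Set (P → F) := {v : P → F | ∃ x : H, ‖x‖ = 1 ∧ ∀ p, v p = B p x x} with hS_def
  rcases isEmpty_or_nonempty P with hP | hP
  · -- trivial case: P empty, P → F is a subsingleton
    intro v hv w hw c d hc hd hcd
    have : c • v + d • w = v := Subsingleton.elim _ _
    rwa [this]
  -- step A: combination of points of S lies in closure S
  have stepA : ∀ v ∈ S, ∀ w ∈ S, ∀ α : ℝ, 0 < α → α < 1 →
      α • v + (1 - α) • w ∈ closure S := by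
    intro v hv w hw α hα0 hα1
    obtain ⟨x, hx, hvx⟩ := hv
    obtain ⟨y, hy, hwy⟩ := hw
    set h : ℕ → H := fun n => (Real.sqrt α : ℂ) • x + (Real.sqrt (1 - α) : ℂ) • ((V ^ n) y)
      with hh_def
    set u : ℕ → H := fun n => (‖h n‖ : ℂ)⁻¹ • h n with hu_def
    have hnorm := (main (Classical.arbitrary P) x y hx hy α hα0 hα1).1
    have hlim : ∀ p, Tendsto (fun n => B p (u n) (u n)) atTop
        (𝓝 ((α : ℂ) • B p x x + ((1 - α : ℝ) : ℂ) • B p y y)) :=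
      fun p => (main p x y hx hy α hα0 hα1).2
    have htend : Tendsto (fun n => (fun p => B p (u n) (u n))) atTop
        (𝓝 (α • v + (1 - α) • w)) := by
      rw [tendsto_pi_nhds]
      intro p
      have coe_smul : ∀ (r : ℝ) (z : F), (r : ℂ) • z = r • z := by
        intro r z
        rw [show (r : ℂ) = r • (1 : ℂ) by rw [Complex.real_smul, mul_one],
          smul_assoc, one_smul]
      have heq : (α • v + (1 - α) • w) p =
          (α : ℂ) • B p x x + ((1 - α : ℝ) : ℂ) • B p y y := by
        simp only [Pi.add_apply, Pi.smul_apply, hvx p, hwy p, coe_smul]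
      rw [heq]
      exact hlim p
    have hev : ∀ᶠ n in atTop, (fun p => B p (u n) (u n)) ∈ S := by
      have hpos : ∀ᶠ n in atTop, 0 < ‖h n‖ :=
        hnorm.eventually (eventually_gt_nhds zero_lt_one)
      filter_upwards [hpos] with n hn
      refine ⟨u n, ?_, fun p => rfl⟩
      rw [hu_def]
      simp only [norm_smul, norm_inv, Complex.norm_real, Real.norm_eq_abs,
        abs_of_pos hn]
      exact inv_mul_cancel₀ (ne_of_gt hn)
    exact mem_closure_of_tendsto htend hev
  -- step B: convexity of the closure
  intro v hv w hw c d hc hd hcd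
  rcases eq_or_lt_of_le hc with hc0 | hc0
  · have hd1 : d = 1 := by linarith
    simpa [← hc0, hd1] using hw
  rcases eq_or_lt_of_le hd with hd0 | hd0
  · have hc1 : c = 1 := by linarith
    simpa [← hd0, hc1] using hv
  have hc1 : c < 1 := by linarith
  have hd_eq : d = 1 - c := by linarith
  subst hd_eq
  have hcont : Continuous (fun q : (P → F) × (P → F) => c • q.1 + (1 - c) • q.2) :=
    (continuous_fst.const_smul c).add (continuous_snd.const_smul (1 - c))
  have hmaps : Set.MapsTo (fun q : (P → F) × (P → F) => c • q.1 + (1 - c) • q.2)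
      (S ×ˢ S) (closure S) := by
    rintro ⟨v', w'⟩ ⟨hv', hw'⟩
    exact stepA v' hv' w' hw' c hc0 hc1
  have hmem : (v, w) ∈ closure (S ×ˢ S) := by
    rw [closure_prod_eq]; exact ⟨hv, hw⟩
  have hfin := map_mem_closure hcont hmem hmaps
  rwa [closure_closure] at hfin
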